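/- Suppose X and X' are real random variables supported in [−B, B] that are (ε, 0)-indistinguishable (i.e., for every measurable set S, Pr[X ∈ S] ≤ e^ε Pr[X' ∈ S] and Pr[X' ∈ S] ≤ e^ε Pr[X ∈ S]), with E[X] = 0 and Var[X] = b². Then E[X'] ≤ C·(e^ε − 1)·b for some universal constant C. -/
import Mathlib

open MeasureTheory

lemma ae_abs_le' {B : ℝ} (μ : Measure ℝ) (h : μ (Set.Icc (-B) B)ᶜ = 0) :
    ∀ᵐ x ∂μ, |x| ≤ B := by
  rw [MeasureTheory.ae_iff]
  refine measure_mono_null ?_ h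
  intro x hx
  simp only [Set.mem_setOf_eq, not_le] at hx
  simp only [Set.mem_compl_iff, Set.mem_Icc, not_and_or, not_le]
  by_contra hc
  push_neg at hc
  exact absurd (abs_le.mpr hc) (not_le.mpr hx)

lemma key_le (μ ν : Measure ℝ) (c : ℝ) (hc : 0 ≤ c)
    (h : ∀ S : Set ℝ, MeasurableSet S → ν S ≤ ENNReal.ofReal c * μ S)
    (f : ℝ → ℝ) (hf : Measurable f) (h0 : ∀ x, 0 ≤ f x)
    (hfμ : Integrable f μ) (hfν : Integrable f ν) :
    ∫ x, f x ∂ν ≤ c * ∫ x, f x ∂μ := by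
  have h0μ : 0 ≤ᵐ[μ] f := Filter.Eventually.of_forall h0
  have h0ν : 0 ≤ᵐ[ν] f := Filter.Eventually.of_forall h0
  rw [integral_eq_lintegral_of_nonneg_ae h0ν hfν.aestronglyMeasurable,
      integral_eq_lintegral_of_nonneg_ae h0μ hfμ.aestronglyMeasurable]
  have hle : ∫⁻ x, ENNReal.ofReal (f x) ∂ν ≤ ∫⁻ x, ENNReal.ofReal (f x) ∂(ENNReal.ofReal c • μ) := by
    refine lintegral_mono' (Measure.le_iff.2 fun s hs => ?_) le_rfl
    simpa using h s hs
  rw [lintegral_smul_measure] at hle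
  have hfin : ∫⁻ x, ENNReal.ofReal (f x) ∂μ < ⊤ :=
    (hasFiniteIntegral_iff_ofReal h0μ).mp hfμ.hasFiniteIntegral
  calc (∫⁻ x, ENNReal.ofReal (f x) ∂ν).toReal
      ≤ (ENNReal.ofReal c * ∫⁻ x, ENNReal.ofReal (f x) ∂μ).toReal :=
        ENNReal.toReal_mono (ENNReal.mul_ne_top ENNReal.ofReal_ne_top hfin.ne) hle
    _ = c * (∫⁻ x, ENNReal.ofReal (f x) ∂μ).toReal := by
        rw [ENNReal.toReal_mul, ENNReal.toReal_ofReal hc]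

theorem stmt_2 : ∃ C > 0, ∀ (B b ε : ℝ), 0 < B → 0 < b → 0 < ε →
    ∀ (μ ν : Measure ℝ), IsProbabilityMeasure μ → IsProbabilityMeasure ν →
    μ (Set.Icc (-B) B)ᶜ = 0 → ν (Set.Icc (-B) B)ᶜ = 0 →
    (∀ S : Set ℝ, MeasurableSet S →
      μ S ≤ ENNReal.ofReal (Real.exp ε) * ν S ∧
      ν S ≤ ENNReal.ofReal (Real.exp ε) * μ S) →
    (∫ x, x ∂μ) = 0 → (∫ x, x ^ 2 ∂μ) = b ^ 2 →
    (∫ x, x ∂ν) ≤ C * (Real.exp ε - 1) * b := by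
  refine ⟨2, two_pos, fun B b ε hB hb hε μ ν hμp hνp hμB hνB hind hmean hvar => ?_⟩
  have hμae := ae_abs_le' μ hμB
  have hνae := ae_abs_le' ν hνB
  have hexp : (0:ℝ) < Real.exp ε := Real.exp_pos ε
  -- integrability
  have hμid : Integrable (fun x => x) μ := by
    refine (integrable_const B).mono' measurable_id.aestronglyMeasurable ?_
    filter_upwards [hμae] with x hx; simpa using hx
  have hνid : Integrable (fun x => x) ν := by
    refine (integrable_const B).mono' measurable_id.aestronglyMeasurable ?_
    filter_upwards [hνae] with x hx; simpa using hx
  have hμsq : Integrable (fun x => x ^ 2) μ := by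
    refine (integrable_const (B ^ 2)).mono'
      (measurable_id.pow_const 2).aestronglyMeasurable ?_
    filter_upwards [hμae] with x hx
    simp only [Real.norm_eq_abs, abs_pow]
    exact pow_le_pow_left₀ (abs_nonneg x) hx 2
  -- positive and negative parts
  have hfμ : Integrable (fun x => max x 0) μ := hμid.pos_part
  have hgμ : Integrable (fun x => max (-x) 0) μ := hμid.neg_part
  have hfν : Integrable (fun x => max x 0) ν := hνid.pos_part
  have hgν : Integrable (fun x => max (-x) 0) ν := hνid.neg_part
  have hfm : Measurable fun x : ℝ => max x 0 := measurable_id.max measurable_const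
  have hgm : Measurable fun x : ℝ => max (-x) 0 := measurable_id.neg.max measurable_const
  set A := ∫ x, max x 0 ∂μ with hA
  have hsplitμ : (∫ x, x ∂μ) = A - ∫ x, max (-x) 0 ∂μ := by
    rw [hA, ← integral_sub hfμ hgμ]
    simp [max_zero_sub_max_neg_zero_eq_self]
  have hsplitν : (∫ x, x ∂ν) = (∫ x, max x 0 ∂ν) - ∫ x, max (-x) 0 ∂ν := by
    rw [← integral_sub hfν hgν]
    simp [max_zero_sub_max_neg_zero_eq_self]
  have hAg : (∫ x, max (-x) 0 ∂μ) = A := by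
    rw [hmean] at hsplitμ; linarith
  have hA0 : 0 ≤ A := integral_nonneg fun x => le_max_right _ _
  -- A ≤ b
  have hAb : A ≤ b := by
    have hint2 : Integrable (fun x => x ^ 2 / (2 * b) + b / 2) μ :=
      (hμsq.div_const _).add (integrable_const _)
    have hmono : A ≤ ∫ x, (x ^ 2 / (2 * b) + b / 2) ∂μ := by
      refine integral_mono hfμ hint2 fun x => ?_
      have h1 : max x 0 ≤ |x| := max_le (le_abs_self x) (abs_nonneg x)
      have h2 : (0:ℝ) ≤ (|x| - b) ^ 2 := sq_nonneg _
      have h3 : |x| ^ 2 = x ^ 2 := sq_abs x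
      rw [div_add_div _ _ (by positivity : (2*b:ℝ) ≠ 0) (two_ne_zero), le_div_iff₀ (by positivity)]
      nlinarith
    have hval : (∫ x, (x ^ 2 / (2 * b) + b / 2) ∂μ) = b := by
      rw [integral_add (hμsq.div_const _) (integrable_const _), integral_div, hvar,
        integral_const]
      simp [measure_univ]
      field_simp
      ring
    linarith
  -- indistinguishability bounds
  have h1 : (∫ x, max x 0 ∂ν) ≤ Real.exp ε * A :=
    key_le μ ν (Real.exp ε) hexp.le (fun S hS => (hind S hS).2) _ hfm
      (fun x => le_max_right _ _) hfμ hfν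
  have h2 : A ≤ Real.exp ε * ∫ x, max (-x) 0 ∂ν := by
    rw [← hAg]
    exact key_le ν μ (Real.exp ε) hexp.le (fun S hS => (hind S hS).1) _ hgm
      (fun x => le_max_right _ _) hgν hgμ
  -- conclude
  have hG0 : 0 ≤ ∫ x, max (-x) 0 ∂ν := integral_nonneg fun x => le_max_right _ _
  have he1 : 1 ≤ Real.exp ε := Real.one_le_exp hε.le
  rw [hsplitν]
  nlinarith [h1, h2, hG0, hA0, hAb, hb, he1, sq_nonneg (Real.exp ε - 1),
    mul_pos hexp hexp]
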